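/- Let A be a real 2n×2n matrix whose eigenvalues all have negative real part except for a simple eigenvalue 0 with right eigenvector v₀, and let C be a matrix with C v₀ = 0. Then the matrix P̂ = ∫₀^∞ e^{Aᵀt} Cᵀ C e^{At} dt satisfies the Lyapunov equation P̂A + Aᵀ P̂ + CᵀC = 0 together with P̂ v₀ = 0. -/

import Mathlib

open Matrix MeasureTheory NormedSpace

lemma aux_hasDerivAt_entry {N : ℕ} (A B : Matrix (Fin N) (Fin N) ℝ) (i j : Fin N) (t : ℝ) :
    HasDerivAt (fun t : ℝ => ((NormedSpace.exp (t • Aᵀ)) * B * NormedSpace.exp (t • A)) i j)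
      ((Aᵀ * ((NormedSpace.exp (t • Aᵀ)) * B * NormedSpace.exp (t • A))
        + ((NormedSpace.exp (t • Aᵀ)) * B * NormedSpace.exp (t • A)) * A) i j) t := by
  letI : NormedRing (Matrix (Fin N) (Fin N) ℝ) := Matrix.linftyOpNormedRing
  letI : NormedAlgebra ℝ (Matrix (Fin N) (Fin N) ℝ) := Matrix.linftyOpNormedAlgebra
  have h1 : HasDerivAt (fun t : ℝ => NormedSpace.exp (t • Aᵀ)) (Aᵀ * NormedSpace.exp (t • Aᵀ)) t :=
    hasDerivAt_exp_smul_const' Aᵀ t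
  have h2 : HasDerivAt (fun t : ℝ => NormedSpace.exp (t • A)) (NormedSpace.exp (t • A) * A) t :=
    hasDerivAt_exp_smul_const A t
  have hM : HasDerivAt (fun t : ℝ => (NormedSpace.exp (t • Aᵀ)) * B * NormedSpace.exp (t • A))
      ((Aᵀ * NormedSpace.exp (t • Aᵀ)) * B * NormedSpace.exp (t • A)
        + ((NormedSpace.exp (t • Aᵀ)) * B) * (NormedSpace.exp (t • A) * A)) t :=
    (h1.mul_const B).mul h2
  let L : Matrix (Fin N) (Fin N) ℝ →L[ℝ] ℝ :=
    { toFun := fun M => M i j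
      map_add' := fun M₁ M₂ => rfl
      map_smul' := fun c M => rfl
      cont := (continuous_apply j).comp (continuous_apply i) }
  have heq : Aᵀ * ((NormedSpace.exp (t • Aᵀ)) * B * NormedSpace.exp (t • A))
        + ((NormedSpace.exp (t • Aᵀ)) * B * NormedSpace.exp (t • A)) * A
      = (Aᵀ * NormedSpace.exp (t • Aᵀ)) * B * NormedSpace.exp (t • A)
        + ((NormedSpace.exp (t • Aᵀ)) * B) * (NormedSpace.exp (t • A) * A) := by
    simp [mul_assoc]
  have h := L.hasFDerivAt.comp_hasDerivAt t hM
  rw [heq]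
  exact h

lemma aux_exp_mulVec {N : ℕ} (A : Matrix (Fin N) (Fin N) ℝ) (v : Fin N → ℝ)
    (hAv : A.mulVec v = 0) (t : ℝ) : (NormedSpace.exp (t • A)).mulVec v = v := by
  letI : NormedRing (Matrix (Fin N) (Fin N) ℝ) := Matrix.linftyOpNormedRing
  letI : NormedAlgebra ℝ (Matrix (Fin N) (Fin N) ℝ) := Matrix.linftyOpNormedAlgebra
  let L : Matrix (Fin N) (Fin N) ℝ →L[ℝ] (Fin N → ℝ) :=
    { toFun := fun M => M.mulVec v
      map_add' := fun M₁ M₂ => Matrix.add_mulVec _ _ _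
      map_smul' := fun c M => by simpa using Matrix.smul_mulVec c M v
      cont := by
        refine continuous_pi fun i => ?_
        simp only [Matrix.mulVec, dotProduct]
        exact continuous_finset_sum _ fun k _ =>
          (continuous_apply_apply i k).mul continuous_const }
  have hd : ∀ s : ℝ, HasDerivAt (fun t : ℝ => (NormedSpace.exp (t • A)).mulVec v) 0 s := by
    intro s
    have h2 : HasDerivAt (fun t : ℝ => NormedSpace.exp (t • A)) (NormedSpace.exp (s • A) * A) s :=
      hasDerivAt_exp_smul_const A s
    have h := L.hasFDerivAt.comp_hasDerivAt s h2
    have hz : L (NormedSpace.exp (s • A) * A) = 0 := by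
      show (NormedSpace.exp (s • A) * A).mulVec v = 0
      rw [← Matrix.mulVec_mulVec, hAv, Matrix.mulVec_zero]
    exact h.congr_deriv hz
  have hconst := is_const_of_deriv_eq_zero (𝕜 := ℝ)
    (fun s => (hd s).differentiableAt) (fun s => (hd s).deriv) t 0
  calc (NormedSpace.exp (t • A)).mulVec v = (NormedSpace.exp ((0 : ℝ) • A)).mulVec v := hconst
    _ = v := by rw [zero_smul, exp_zero, Matrix.one_mulVec]

/-- the integral Gramian `Phat = ∫₀^∞ e^{Aᵀt} Cᵀ C e^{At} dt` satisfies the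
Lyapunov equation `Phat A + Aᵀ Phat + Cᵀ C = 0` together with `Phat v₀ = 0`. -/
theorem gramian_solves_lyapunov
    (n p : ℕ) (A : Matrix (Fin (2 * n)) (Fin (2 * n)) ℝ)
    (C : Matrix (Fin p) (Fin (2 * n)) ℝ) (v₀ : Fin (2 * n) → ℝ)
    (hv₀ : v₀ ≠ 0) (hAv₀ : A.mulVec v₀ = 0) (hCv₀ : C.mulVec v₀ = 0)
    -- all eigenvalues other than 0 have strictly negative real part
    (hspec : ∀ μ ∈ spectrum ℂ (A.map (algebraMap ℝ ℂ)), μ ≠ 0 → μ.re < 0)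
    -- the eigenvalue 0 is simple
    (hsimple : A.rank = 2 * n - 1)
    -- the improper integral converges (entrywise)
    (hint : ∀ i j, IntegrableOn
      (fun t : ℝ => ((NormedSpace.exp (t • Aᵀ)) * (Cᵀ * C) * NormedSpace.exp (t • A)) i j) (Set.Ioi 0))
    (Phat : Matrix (Fin (2 * n)) (Fin (2 * n)) ℝ)
    (hPhat : Phat = Matrix.of fun i j =>
      ∫ t in Set.Ioi (0 : ℝ), ((NormedSpace.exp (t • Aᵀ)) * (Cᵀ * C) * NormedSpace.exp (t • A)) i j) :
    Phat * A + Aᵀ * Phat + Cᵀ * C = 0 ∧ Phat.mulVec v₀ = 0 := by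
  set M : ℝ → Matrix (Fin (2 * n)) (Fin (2 * n)) ℝ :=
    fun t => (NormedSpace.exp (t • Aᵀ)) * (Cᵀ * C) * NormedSpace.exp (t • A) with hM
  have hd : ∀ (i j) (t : ℝ), HasDerivAt (fun t : ℝ => M t i j)
      ((Aᵀ * M t + M t * A) i j) t := fun i j t => aux_hasDerivAt_entry A (Cᵀ * C) i j t
  have hintD : ∀ i j, IntegrableOn (fun t : ℝ => (Aᵀ * M t + M t * A) i j) (Set.Ioi 0) := by
    intro i j
    have h1 : IntegrableOn (fun t : ℝ => (Aᵀ * M t) i j) (Set.Ioi 0) := by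
      have : (fun t : ℝ => (Aᵀ * M t) i j) = fun t => ∑ k, Aᵀ i k * M t k j :=
        funext fun t => Matrix.mul_apply
      rw [this]
      exact integrable_finset_sum _ fun k _ => (hint k j).const_mul _
    have h2 : IntegrableOn (fun t : ℝ => (M t * A) i j) (Set.Ioi 0) := by
      have : (fun t : ℝ => (M t * A) i j) = fun t => ∑ k, M t i k * A k j :=
        funext fun t => Matrix.mul_apply
      rw [this]
      exact integrable_finset_sum _ fun k _ => (hint i k).mul_const _
    have : (fun t : ℝ => (Aᵀ * M t + M t * A) i j)
        = fun t : ℝ => (Aᵀ * M t) i j + (M t * A) i j := rfl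
    rw [this]
    exact h1.add h2
  have hM0 : M 0 = Cᵀ * C := by
    rw [hM]; simp [zero_smul, exp_zero]
  have key : ∀ i j, (∫ t in Set.Ioi (0 : ℝ), (Aᵀ * M t + M t * A) i j)
      = - (Cᵀ * C) i j := by
    intro i j
    have tend : Filter.Tendsto (fun t : ℝ => M t i j) Filter.atTop (nhds 0) :=
      tendsto_zero_of_hasDerivAt_of_integrableOn_Ioi (a := 0)
        (fun x _ => hd i j x) (hintD i j) (hint i j)
    have := integral_Ioi_of_hasDerivAt_of_tendsto (a := 0)
      (hd i j 0).continuousAt.continuousWithinAt (fun x _ => hd i j x) (hintD i j) tend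
    rw [this, hM0]
    ring
  constructor
  · ext i j
    have hPA : (Phat * A) i j = ∫ t in Set.Ioi (0 : ℝ), (M t * A) i j := by
      rw [Matrix.mul_apply]
      have : ∀ k, Phat i k * A k j = ∫ t in Set.Ioi (0 : ℝ), M t i k * A k j := by
        intro k
        rw [hPhat]
        exact (integral_mul_const _ _).symm
      rw [Finset.sum_congr rfl fun k _ => this k,
        ← integral_finset_sum _ fun k _ => (hint i k).mul_const _]
      refine integral_congr_ae (Filter.Eventually.of_forall fun t => ?_)
      show ∑ k, M t i k * A k j = (M t * A) i j
      exact (Matrix.mul_apply).symm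
    have hAP : (Aᵀ * Phat) i j = ∫ t in Set.Ioi (0 : ℝ), (Aᵀ * M t) i j := by
      rw [Matrix.mul_apply]
      have : ∀ k, Aᵀ i k * Phat k j = ∫ t in Set.Ioi (0 : ℝ), Aᵀ i k * M t k j := by
        intro k
        rw [hPhat]
        exact (integral_const_mul _ _).symm
      rw [Finset.sum_congr rfl fun k _ => this k,
        ← integral_finset_sum _ fun k _ => (hint k j).const_mul _]
      refine integral_congr_ae (Filter.Eventually.of_forall fun t => ?_)
      show ∑ k, Aᵀ i k * M t k j = (Aᵀ * M t) i j
      exact (Matrix.mul_apply).symm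
    have hsum : (Phat * A) i j + (Aᵀ * Phat) i j
        = ∫ t in Set.Ioi (0 : ℝ), (Aᵀ * M t + M t * A) i j := by
      rw [hPA, hAP, ← integral_add (by
          have : (fun t : ℝ => (M t * A) i j) = fun t => ∑ k, M t i k * A k j :=
            funext fun t => Matrix.mul_apply
          rw [this]
          exact integrable_finset_sum _ fun k _ => (hint i k).mul_const _)
        (by
          have : (fun t : ℝ => (Aᵀ * M t) i j) = fun t => ∑ k, Aᵀ i k * M t k j :=
            funext fun t => Matrix.mul_apply
          rw [this]
          exact integrable_finset_sum _ fun k _ => (hint k j).const_mul _)]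
      refine integral_congr_ae (Filter.Eventually.of_forall fun t => ?_)
      simp [Matrix.add_apply]
      ring
    have : (Phat * A + Aᵀ * Phat + Cᵀ * C) i j
        = (Phat * A) i j + (Aᵀ * Phat) i j + (Cᵀ * C) i j := rfl
    rw [Matrix.zero_apply, this, hsum, key i j]
    ring
  · funext i
    have hMv : ∀ t : ℝ, (M t).mulVec v₀ = 0 := by
      intro t
      rw [hM]
      show ((NormedSpace.exp (t • Aᵀ)) * (Cᵀ * C) * NormedSpace.exp (t • A)).mulVec v₀ = 0
      rw [← Matrix.mulVec_mulVec, aux_exp_mulVec A v₀ hAv₀ t, ← Matrix.mulVec_mulVec,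
        ← Matrix.mulVec_mulVec, hCv₀, Matrix.mulVec_zero, Matrix.mulVec_zero]
    have : Phat.mulVec v₀ i = ∫ t in Set.Ioi (0 : ℝ), ((M t).mulVec v₀) i := by
      show ∑ k, Phat i k * v₀ k = _
      have h1 : ∀ k, Phat i k * v₀ k = ∫ t in Set.Ioi (0 : ℝ), M t i k * v₀ k := by
        intro k
        rw [hPhat]
        exact (integral_mul_const _ _).symm
      rw [Finset.sum_congr rfl fun k _ => h1 k,
        ← integral_finset_sum _ fun k _ => (hint i k).mul_const _]
      rfl
    rw [this]
    simp [hMv]
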